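/- Let (X_i) be a Markov chain on a countable state space, A a subset of the state space, y ∈ A, and G_A(x, y) = Σ_{i=0}^{∞} P^x(X_i = y, i < T_{A^c}) the Green's function. Let L = Σ_{i < T_{A^c}} 1{X_i = y} be the number of visits to y before exiting A. Then for every positive integer k and every starting point x, E^x[L^k] ≤ k! · G_A(x, y) · G_A(y, y)^{k−1}. -/
import Mathlib

open MeasureTheory Finset
open scoped ENNReal

namespace LocalTimeAux

def psum : ∀ {k : ℕ}, (Fin k → ℕ) → Fin k → ℕ
  | 0, _ => Fin.elim0
  | _ + 1, d => Fin.cons (d 0) (fun m => d 0 + psum (Fin.tail d) m)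

lemma psum_zero {k : ℕ} (d : Fin (k + 1) → ℕ) : psum d 0 = d 0 := rfl

lemma psum_succ {k : ℕ} (d : Fin (k + 1) → ℕ) (m : Fin k) :
    psum d m.succ = d 0 + psum (Fin.tail d) m := by
  simp [psum]

lemma exists_psum_eq : ∀ {k : ℕ} (s : Fin k → ℕ), Monotone s → ∃ d, psum d = s := by
  intro k
  induction k with
  | zero => exact fun s _ => ⟨Fin.elim0, funext fun m => m.elim0⟩
  | succ n ih =>
    intro s hs
    obtain ⟨d', hd'⟩ := ih (fun m => s m.succ - s 0)
      (fun a b hab => Nat.sub_le_sub_right (hs (Fin.succ_le_succ_iff.mpr hab)) _)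
    refine ⟨Fin.cons (s 0) d', funext fun m => ?_⟩
    induction m using Fin.cases with
    | zero => simp [psum_zero]
    | succ m =>
      rw [psum_succ, Fin.tail_cons, hd', Fin.cons_zero]
      have h0 : s 0 ≤ s m.succ := hs (Fin.zero_le _)
      simp
      omega

lemma psum_surj (k : ℕ) :
    Function.Surjective (fun p : Equiv.Perm (Fin k) × (Fin k → ℕ) => psum p.2 ∘ ⇑p.1) := by
  intro t
  obtain ⟨d, hd⟩ := exists_psum_eq (t ∘ Tuple.sort t) (Tuple.monotone_sort t)
  refine ⟨⟨(Tuple.sort t)⁻¹, d⟩, funext fun m => ?_⟩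
  simp [hd, Function.comp]

lemma tsum_pow (g : ℕ → ℝ≥0∞) (k : ℕ) :
    (∑' i, g i) ^ k = ∑' t : Fin k → ℕ, ∏ m, g (t m) := by
  induction k with
  | zero => simp [tsum_fintype]
  | succ n ih =>
    rw [pow_succ, ih, ← (Fin.consEquiv (fun _ : Fin (n + 1) => ℕ)).tsum_eq]
    have : ∀ p : ℕ × (Fin n → ℕ),
        (∏ m : Fin (n + 1), g ((Fin.consEquiv (fun _ : Fin (n+1) => ℕ)) p m))
          = g p.1 * ∏ m : Fin n, g (p.2 m) := by
      intro p
      simp [Fin.consEquiv, Fin.prod_univ_succ]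
    rw [tsum_congr this, ENNReal.tsum_prod']
    simp_rw [ENNReal.tsum_mul_left]
    rw [ENNReal.tsum_mul_right, mul_comm]

lemma markov_prod {S : Type*} [MeasurableSpace S]
    (Px : S → Measure (ℕ → S))
    (hMarkov : ∀ (x y : S) (n : ℕ) (E B : Set (ℕ → S)), MeasurableSet B →
      (∀ ω ω' : ℕ → S, (∀ k ≤ n, ω k = ω' k) → (ω ∈ E ↔ ω' ∈ E)) →
      E ⊆ {ω | ω n = y} →
      Px x (E ∩ (fun ω k => ω (n + k)) ⁻¹' B) = Px x E * Px y B)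
    (A : Set S) (y : S)
    (hV : ∀ i : ℕ, MeasurableSet {ω : ℕ → S | ω i = y ∧ ∀ j ≤ i, ω j ∈ A}) :
    ∀ (n : ℕ) (z : S) (d : Fin (n + 1) → ℕ),
      Px z {ω | ∀ m, ω (psum d m) = y ∧ ∀ j ≤ psum d m, ω j ∈ A}
        = Px z {ω | ω (d 0) = y ∧ ∀ j ≤ d 0, ω j ∈ A}
          * ∏ m : Fin n, Px y {ω | ω (d m.succ) = y ∧ ∀ j ≤ d m.succ, ω j ∈ A} := by
  intro n
  induction n with
  | zero =>
    intro z d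
    have hset : {ω : ℕ → S | ∀ m, ω (psum d m) = y ∧ ∀ j ≤ psum d m, ω j ∈ A}
        = {ω | ω (d 0) = y ∧ ∀ j ≤ d 0, ω j ∈ A} := by
      ext ω; simp [Fin.forall_fin_one, psum_zero]
    rw [hset]; simp
  | succ n ih =>
    intro z d
    have key : {ω : ℕ → S | ∀ m, ω (psum d m) = y ∧ ∀ j ≤ psum d m, ω j ∈ A}
        = {ω | ω (d 0) = y ∧ ∀ j ≤ d 0, ω j ∈ A} ∩
          (fun ω k => ω (d 0 + k)) ⁻¹'
            {ω : ℕ → S | ∀ m, ω (psum (Fin.tail d) m) = y ∧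
              ∀ j ≤ psum (Fin.tail d) m, ω j ∈ A} := by
      ext ω
      simp only [Set.mem_setOf_eq, Set.mem_inter_iff, Set.mem_preimage]
      constructor
      · intro h
        refine ⟨by simpa [psum_zero] using h 0, fun m => ?_⟩
        have hm := h m.succ
        rw [psum_succ] at hm
        exact ⟨hm.1, fun j hj => hm.2 _ (by omega)⟩
      · rintro ⟨h0, h⟩ m
        induction m using Fin.cases with
        | zero => simpa [psum_zero] using h0
        | succ m =>
          rw [psum_succ]
          refine ⟨(h m).1, fun j hj => ?_⟩
          rcases le_or_gt j (d 0) with hj' | hj'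
          · exact h0.2 j hj'
          · have hh := (h m).2 (j - d 0) (by omega)
            simpa [Nat.add_sub_cancel' hj'.le] using hh
    have Bmeas : MeasurableSet {ω : ℕ → S | ∀ m, ω (psum (Fin.tail d) m) = y ∧
        ∀ j ≤ psum (Fin.tail d) m, ω j ∈ A} := by
      rw [Set.setOf_forall]
      exact MeasurableSet.iInter fun m => hV _
    have hdet : ∀ ω ω' : ℕ → S, (∀ k ≤ d 0, ω k = ω' k) →
        (ω ∈ {ω : ℕ → S | ω (d 0) = y ∧ ∀ j ≤ d 0, ω j ∈ A} ↔
          ω' ∈ {ω : ℕ → S | ω (d 0) = y ∧ ∀ j ≤ d 0, ω j ∈ A}) := by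
      intro ω ω' hww
      simp only [Set.mem_setOf_eq]
      constructor
      · rintro ⟨h1, h2⟩
        exact ⟨(hww _ le_rfl).symm.trans h1, fun j hj => hww j hj ▸ h2 j hj⟩
      · rintro ⟨h1, h2⟩
        exact ⟨(hww _ le_rfl).trans h1, fun j hj => (hww j hj).symm ▸ h2 j hj⟩
    rw [key, hMarkov z y (d 0) _ _ Bmeas hdet (fun ω hω => hω.1), ih y (Fin.tail d),
      Fin.prod_univ_succ]
    simp only [Fin.tail]

end LocalTimeAux

open LocalTimeAux

/-- Moment bound for the number of visits to `y` before exiting `A`: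
`E^x[L^k] ≤ k! · G_A(x,y) · G_A(y,y)^{k-1}`.  The Markov chain on the countable state
space `S` is encoded by its family of path measures `Px`, with the Markov property
expressed for events determined by the first `n+1` coordinates. -/
theorem local_time_moment_bound {S : Type*} [Countable S] [MeasurableSpace S]
    [MeasurableSingletonClass S]
    (Px : S → Measure (ℕ → S)) (hprob : ∀ x, IsProbabilityMeasure (Px x))
    (hstart : ∀ x, Px x {ω | ω 0 = x} = 1)
    (hMarkov : ∀ (x y : S) (n : ℕ) (E B : Set (ℕ → S)), MeasurableSet B →
      (∀ ω ω' : ℕ → S, (∀ k ≤ n, ω k = ω' k) → (ω ∈ E ↔ ω' ∈ E)) →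
      E ⊆ {ω | ω n = y} →
      Px x (E ∩ (fun ω k => ω (n + k)) ⁻¹' B) = Px x E * Px y B)
    (A : Set S) (y : S) (hy : y ∈ A) (x : S) (k : ℕ) (hk : 1 ≤ k) :
    ∫⁻ ω, (∑' i : ℕ, ({i' : ℕ | ω i' = y ∧ ∀ j ≤ i', ω j ∈ A}.indicator
        (fun _ => (1 : ℝ≥0∞)) i)) ^ k ∂(Px x)
      ≤ (Nat.factorial k : ℝ≥0∞)
        * (∑' i : ℕ, Px x {ω | ω i = y ∧ ∀ j ≤ i, ω j ∈ A})
        * (∑' i : ℕ, Px y {ω | ω i = y ∧ ∀ j ≤ i, ω j ∈ A}) ^ (k - 1) := by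
  classical
  obtain ⟨n, rfl⟩ : ∃ n, k = n + 1 := ⟨k - 1, by omega⟩
  have hVmeas : ∀ i : ℕ, MeasurableSet {ω : ℕ → S | ω i = y ∧ ∀ j ≤ i, ω j ∈ A} := by
    intro i
    have hset : {ω : ℕ → S | ω i = y ∧ ∀ j ≤ i, ω j ∈ A}
        = ((fun ω : ℕ → S => ω i) ⁻¹' {y}) ∩
          ⋂ j, ⋂ _ : j ≤ i, (fun ω : ℕ → S => ω j) ⁻¹' A := by
      ext ω; simp
    rw [hset]
    exact ((measurable_pi_apply i) (measurableSet_singleton y)).inter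
      (MeasurableSet.iInter fun j => MeasurableSet.iInter fun _ =>
        (measurable_pi_apply j) (A.to_countable.measurableSet))
  -- pointwise: product of indicators is indicator of intersection
  have hprodind : ∀ (t : Fin (n + 1) → ℕ) (ω : ℕ → S),
      (∏ m : Fin (n + 1), ({i' : ℕ | ω i' = y ∧ ∀ j ≤ i', ω j ∈ A}.indicator
          (fun _ => (1 : ℝ≥0∞)) (t m)))
        = (⋂ m : Fin (n + 1),
            {ω' : ℕ → S | ω' (t m) = y ∧ ∀ j ≤ t m, ω' j ∈ A}).indicator
            (fun _ => (1 : ℝ≥0∞)) ω := by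
    intro t ω
    simp only [Set.indicator_apply, Set.mem_setOf_eq, Set.mem_iInter]
    rw [Finset.prod_boole]
    simp
  have hEmeas : ∀ t : Fin (n + 1) → ℕ, MeasurableSet
      (⋂ m : Fin (n + 1), {ω' : ℕ → S | ω' (t m) = y ∧ ∀ j ≤ t m, ω' j ∈ A}) :=
    fun t => MeasurableSet.iInter fun m => hVmeas (t m)
  calc
    ∫⁻ ω, (∑' i : ℕ, ({i' : ℕ | ω i' = y ∧ ∀ j ≤ i', ω j ∈ A}.indicator
        (fun _ => (1 : ℝ≥0∞)) i)) ^ (n + 1) ∂(Px x)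
      = ∫⁻ ω, ∑' t : Fin (n + 1) → ℕ,
          ∏ m, ({i' : ℕ | ω i' = y ∧ ∀ j ≤ i', ω j ∈ A}.indicator
            (fun _ => (1 : ℝ≥0∞)) (t m)) ∂(Px x) :=
        lintegral_congr fun ω => tsum_pow _ _
    _ ≤ ∫⁻ ω, ((Nat.factorial (n + 1) : ℝ≥0∞) * ∑' d : Fin (n + 1) → ℕ,
          ∏ m, ({i' : ℕ | ω i' = y ∧ ∀ j ≤ i', ω j ∈ A}.indicator
            (fun _ => (1 : ℝ≥0∞)) (psum d m))) ∂(Px x) := by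
        refine lintegral_mono fun ω => ?_
        set g : ℕ → ℝ≥0∞ := fun i => ({i' : ℕ | ω i' = y ∧ ∀ j ≤ i', ω j ∈ A}.indicator
          (fun _ => (1 : ℝ≥0∞)) i) with hg
        calc
          (∑' t : Fin (n + 1) → ℕ, ∏ m, g (t m))
            ≤ ∑' p : Equiv.Perm (Fin (n + 1)) × (Fin (n + 1) → ℕ),
                ∏ m, g ((psum p.2 ∘ ⇑p.1) m) :=
              ENNReal.tsum_le_tsum_comp_of_surjective (psum_surj (n + 1)) _
          _ = ∑' p : Equiv.Perm (Fin (n + 1)) × (Fin (n + 1) → ℕ),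
                ∏ m, g (psum p.2 m) :=
              tsum_congr fun p => Equiv.prod_comp p.1 (fun m => g (psum p.2 m))
          _ = ∑' _ : Equiv.Perm (Fin (n + 1)), ∑' d : Fin (n + 1) → ℕ,
                ∏ m, g (psum d m) := ENNReal.tsum_prod'
          _ = (Nat.factorial (n + 1) : ℝ≥0∞) * ∑' d : Fin (n + 1) → ℕ,
                ∏ m, g (psum d m) := by
              rw [tsum_fintype]
              simp [Finset.sum_const, nsmul_eq_mul, Fintype.card_perm, Fintype.card_fin]
    _ = (Nat.factorial (n + 1) : ℝ≥0∞) * ∑' d : Fin (n + 1) → ℕ,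
          ∫⁻ ω, (∏ m, ({i' : ℕ | ω i' = y ∧ ∀ j ≤ i', ω j ∈ A}.indicator
            (fun _ => (1 : ℝ≥0∞)) (psum d m))) ∂(Px x) := by
        rw [lintegral_const_mul' _ _ (by simp), lintegral_tsum]
        intro d
        refine Measurable.aemeasurable ?_
        have : (fun ω : ℕ → S => ∏ m, ({i' : ℕ | ω i' = y ∧ ∀ j ≤ i', ω j ∈ A}.indicator
            (fun _ => (1 : ℝ≥0∞)) (psum d m)))
            = (⋂ m : Fin (n + 1),
                {ω' : ℕ → S | ω' (psum d m) = y ∧ ∀ j ≤ psum d m, ω' j ∈ A}).indicator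
                (fun _ => (1 : ℝ≥0∞)) := funext fun ω => hprodind (psum d) ω
        rw [this]
        exact measurable_const.indicator (hEmeas (psum d))
    _ = (Nat.factorial (n + 1) : ℝ≥0∞) * ∑' d : Fin (n + 1) → ℕ,
          Px x (⋂ m : Fin (n + 1),
            {ω' : ℕ → S | ω' (psum d m) = y ∧ ∀ j ≤ psum d m, ω' j ∈ A}) := by
        congr 1
        refine tsum_congr fun d => ?_
        rw [show (fun ω : ℕ → S => ∏ m, ({i' : ℕ | ω i' = y ∧ ∀ j ≤ i', ω j ∈ A}.indicator
            (fun _ => (1 : ℝ≥0∞)) (psum d m)))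
            = (⋂ m : Fin (n + 1),
                {ω' : ℕ → S | ω' (psum d m) = y ∧ ∀ j ≤ psum d m, ω' j ∈ A}).indicator
                (fun _ => (1 : ℝ≥0∞)) from funext fun ω => hprodind (psum d) ω]
        exact lintegral_indicator_one (hEmeas (psum d))
    _ = (Nat.factorial (n + 1) : ℝ≥0∞) * ∑' d : Fin (n + 1) → ℕ,
          (Px x {ω : ℕ → S | ω (d 0) = y ∧ ∀ j ≤ d 0, ω j ∈ A}
            * ∏ m : Fin n, Px y {ω : ℕ → S | ω (d m.succ) = y ∧ ∀ j ≤ d m.succ, ω j ∈ A}) := by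
        congr 1
        refine tsum_congr fun d => ?_
        rw [show (⋂ m : Fin (n + 1),
            {ω' : ℕ → S | ω' (psum d m) = y ∧ ∀ j ≤ psum d m, ω' j ∈ A})
            = {ω : ℕ → S | ∀ m, ω (psum d m) = y ∧ ∀ j ≤ psum d m, ω j ∈ A} by
          ext ω; simp]
        exact markov_prod Px hMarkov A y hVmeas n x d
    _ = (Nat.factorial (n + 1) : ℝ≥0∞)
          * ((∑' i : ℕ, Px x {ω | ω i = y ∧ ∀ j ≤ i, ω j ∈ A})
            * (∑' i : ℕ, Px y {ω | ω i = y ∧ ∀ j ≤ i, ω j ∈ A}) ^ n) := by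
        congr 1
        rw [← (Fin.consEquiv (fun _ : Fin (n + 1) => ℕ)).tsum_eq]
        have hc : ∀ p : ℕ × (Fin n → ℕ),
            (Px x {ω : ℕ → S | ω ((Fin.consEquiv (fun _ : Fin (n+1) => ℕ)) p 0) = y ∧
                ∀ j ≤ (Fin.consEquiv (fun _ : Fin (n+1) => ℕ)) p 0, ω j ∈ A}
              * ∏ m : Fin n, Px y {ω : ℕ → S |
                  ω ((Fin.consEquiv (fun _ : Fin (n+1) => ℕ)) p m.succ) = y ∧
                  ∀ j ≤ (Fin.consEquiv (fun _ : Fin (n+1) => ℕ)) p m.succ, ω j ∈ A})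
            = Px x {ω : ℕ → S | ω p.1 = y ∧ ∀ j ≤ p.1, ω j ∈ A}
              * ∏ m : Fin n, Px y {ω : ℕ → S | ω (p.2 m) = y ∧ ∀ j ≤ p.2 m, ω j ∈ A} := by
          intro p
          simp [Fin.consEquiv]
        rw [tsum_congr hc, ENNReal.tsum_prod']
        simp_rw [ENNReal.tsum_mul_left]
        rw [ENNReal.tsum_mul_right]
        congr 1
        · exact (tsum_pow (fun i => Px y {ω : ℕ → S | ω i = y ∧ ∀ j ≤ i, ω j ∈ A}) n).symm
    _ = (Nat.factorial (n + 1) : ℝ≥0∞)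
          * (∑' i : ℕ, Px x {ω | ω i = y ∧ ∀ j ≤ i, ω j ∈ A})
          * (∑' i : ℕ, Px y {ω | ω i = y ∧ ∀ j ≤ i, ω j ∈ A}) ^ (n + 1 - 1) := by
        simp [mul_assoc]
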